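/- Let n be an integer, j ≥ 1 an integer, and 0 < R₀ < R real numbers. The function g(r) = r^(−(n−3)/2)·sin( jπ·log(r/R₀)/log(R/R₀) ) satisfies g(R₀) = 0, g(R) = 0, and the differential equation −r²·g''(r) − (n−2)·r·g'(r) = β_j·g(r) for every r ∈ (R₀, R), where β_j = ((n−3)/2)² + ( jπ/log(R/R₀) )². -/

import Mathlib

open Real

/-- The radial eigenfunction `g(r) = r^(-(n-3)/2) sin(jπ log(r/R₀)/log(R/R₀))`. -/
noncomputable def radialEigen (n : ℤ) (j : ℕ) (R₀ R : ℝ) : ℝ → ℝ :=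
  fun r => r ^ (-(((n : ℝ) - 3) / 2)) *
    Real.sin ((j : ℝ) * Real.pi * Real.log (r / R₀) / Real.log (R / R₀))

lemma radial_hasDerivAt_aux (b p q c R₀ : ℝ) (hR₀ : 0 < R₀) {r : ℝ} (hr : 0 < r) :
    HasDerivAt (fun x : ℝ => x ^ b *
        (p * Real.sin (c * Real.log (x / R₀)) + q * Real.cos (c * Real.log (x / R₀))))
      (r ^ (b - 1) * ((b * p - c * q) * Real.sin (c * Real.log (r / R₀)) +
        (b * q + c * p) * Real.cos (c * Real.log (r / R₀)))) r := by
  have hr' : r ≠ 0 := hr.ne'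
  have hlog : HasDerivAt (fun x : ℝ => Real.log (x / R₀)) r⁻¹ r := by
    have h1 : HasDerivAt (fun x : ℝ => x / R₀) (1 / R₀) r := (hasDerivAt_id r).div_const R₀
    have h2 := (Real.hasDerivAt_log (div_ne_zero hr' hR₀.ne')).comp r h1
    refine h2.congr_deriv ?_
    field_simp
  have hθ : HasDerivAt (fun x : ℝ => c * Real.log (x / R₀)) (c * r⁻¹) r := hlog.const_mul c
  have hsin := (Real.hasDerivAt_sin (c * Real.log (r / R₀))).comp r hθ
  have hcos := (Real.hasDerivAt_cos (c * Real.log (r / R₀))).comp r hθ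
  have hpow : HasDerivAt (fun x : ℝ => x ^ b) (b * r ^ (b - 1)) r :=
    Real.hasDerivAt_rpow_const (Or.inl hr')
  have h := hpow.mul ((hsin.const_mul p).add (hcos.const_mul q))
  refine h.congr_deriv ?_
  simp only [Pi.add_apply, Function.comp_apply]
  have hrb : r ^ b = r ^ (b - 1) * r := by
    rw [← Real.rpow_add_one hr' (b - 1)]; ring_nf
  rw [hrb]
  field_simp
  ring

/-- `g` vanishes at `R₀` and `R`, and satisfies
`-r² g''(r) - (n-2) r g'(r) = β_j g(r)` on `(R₀, R)`, where
`β_j = ((n-3)/2)² + (jπ/log(R/R₀))²`. -/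
theorem radialEigen_ode (n : ℤ) (j : ℕ) (hj : 1 ≤ j) (R₀ R : ℝ)
    (hR₀ : 0 < R₀) (hR : R₀ < R) :
    radialEigen n j R₀ R R₀ = 0 ∧ radialEigen n j R₀ R R = 0 ∧
    ∀ r ∈ Set.Ioo R₀ R,
      -(r ^ 2) * deriv (deriv (radialEigen n j R₀ R)) r -
          ((n : ℝ) - 2) * r * deriv (radialEigen n j R₀ R) r
        = ((((n : ℝ) - 3) / 2) ^ 2 + ((j : ℝ) * Real.pi / Real.log (R / R₀)) ^ 2) *
            radialEigen n j R₀ R r := by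
  have hRR : (1:ℝ) < R / R₀ := (one_lt_div hR₀).mpr hR
  have hL : Real.log (R / R₀) ≠ 0 := (Real.log_pos hRR).ne'
  refine ⟨?_, ?_, ?_⟩
  · simp [radialEigen, div_self hR₀.ne']
  · have : (j : ℝ) * Real.pi * Real.log (R / R₀) / Real.log (R / R₀) = (j : ℝ) * Real.pi := by
      field_simp
    simp [radialEigen, this, Real.sin_nat_mul_pi]
  · intro r hr
    have hr0 : 0 < r := hR₀.trans hr.1
    set a : ℝ := -(((n : ℝ) - 3) / 2) with ha
    set c : ℝ := (j : ℝ) * Real.pi / Real.log (R / R₀) with hc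
    have hgeq : radialEigen n j R₀ R = fun x => x ^ a * Real.sin (c * Real.log (x / R₀)) := by
      funext x
      have : c * Real.log (x / R₀) =
          (j : ℝ) * Real.pi * Real.log (x / R₀) / Real.log (R / R₀) := by
        rw [hc]; ring
      rw [radialEigen, this]
    have hg' : ∀ x : ℝ, 0 < x → HasDerivAt (radialEigen n j R₀ R)
        (x ^ (a - 1) * (a * Real.sin (c * Real.log (x / R₀)) +
          c * Real.cos (c * Real.log (x / R₀)))) x := by
      intro x hx
      rw [hgeq]
      have h := radial_hasDerivAt_aux a 1 0 c R₀ hR₀ hx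
      simp only [one_mul, zero_mul, mul_zero, add_zero, mul_one, sub_zero, zero_add] at h
      exact h
    have hderiv_g : ∀ x : ℝ, 0 < x → deriv (radialEigen n j R₀ R) x =
        x ^ (a - 1) * (a * Real.sin (c * Real.log (x / R₀)) +
          c * Real.cos (c * Real.log (x / R₀))) := fun x hx => (hg' x hx).deriv
    have hG' : HasDerivAt (fun x : ℝ => x ^ (a - 1) *
        (a * Real.sin (c * Real.log (x / R₀)) + c * Real.cos (c * Real.log (x / R₀))))
        (r ^ (a - 2) * (((a - 1) * a - c * c) * Real.sin (c * Real.log (r / R₀)) +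
          ((a - 1) * c + c * a) * Real.cos (c * Real.log (r / R₀)))) r := by
      have h := radial_hasDerivAt_aux (a - 1) a c c R₀ hR₀ hr0
      convert h using 2 <;> ring
    have hEq : deriv (radialEigen n j R₀ R) =ᶠ[nhds r]
        (fun x : ℝ => x ^ (a - 1) * (a * Real.sin (c * Real.log (x / R₀)) +
          c * Real.cos (c * Real.log (x / R₀)))) :=
      Filter.eventuallyEq_of_mem (isOpen_Ioi.mem_nhds hr0) (fun x hx => hderiv_g x hx)
    have h2 : deriv (deriv (radialEigen n j R₀ R)) r =
        r ^ (a - 2) * (((a - 1) * a - c * c) * Real.sin (c * Real.log (r / R₀)) +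
          ((a - 1) * c + c * a) * Real.cos (c * Real.log (r / R₀))) := by
      rw [hEq.deriv_eq]
      exact hG'.deriv
    rw [h2, hderiv_g r hr0, hgeq]
    have e1 : r ^ (2:ℕ) * r ^ (a - 2) = r ^ a := by
      rw [← Real.rpow_natCast r 2, ← Real.rpow_add hr0]
      norm_num
    have e2 : r * r ^ (a - 1) = r ^ a := by
      nth_rewrite 1 [← Real.rpow_one r]
      rw [← Real.rpow_add hr0]
      ring_nf
    have hstep : -(r ^ 2) * (r ^ (a - 2) * (((a - 1) * a - c * c) * Real.sin (c * Real.log (r / R₀)) +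
          ((a - 1) * c + c * a) * Real.cos (c * Real.log (r / R₀)))) -
        ((n : ℝ) - 2) * r * (r ^ (a - 1) * (a * Real.sin (c * Real.log (r / R₀)) +
          c * Real.cos (c * Real.log (r / R₀)))) =
        r ^ a * (-(((a - 1) * a - c * c) * Real.sin (c * Real.log (r / R₀)) +
          ((a - 1) * c + c * a) * Real.cos (c * Real.log (r / R₀))) -
          ((n : ℝ) - 2) * (a * Real.sin (c * Real.log (r / R₀)) +
          c * Real.cos (c * Real.log (r / R₀)))) := by
      linear_combination
        (-(((a - 1) * a - c * c) * Real.sin (c * Real.log (r / R₀)) +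
          ((a - 1) * c + c * a) * Real.cos (c * Real.log (r / R₀)))) * e1 +
        (-(((n : ℝ) - 2) * (a * Real.sin (c * Real.log (r / R₀)) +
          c * Real.cos (c * Real.log (r / R₀))))) * e2
    rw [hstep, ha]
    ring
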